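/- Let γ be a Frenet curve in a 3-dimensional Riemannian manifold parametrized by arc length with Frenet frame {T, N, B} and curvatures κ, τ, and let V = λ₀ T + cos θ N + λ₁ B be a unit torse-forming vector field along γ with potential f and ω(T) = -f λ₀. Then the Frenet equations force the system: f(1-λ₀²) - λ₀' + κ cos θ = 0, -f λ₀ cos θ + θ' sin θ - λ₀ κ + λ₁ τ = 0, and f λ₀ λ₁ + λ₁' + τ cos θ = 0. -/

import Mathlib

/-- Let γ be an arc-length Frenet curve in a Riemannian 3-manifold with
Frenet frame {T,N,B} and curvatures κ, τ (∇_T T = κN, ∇_T N = -κT + τB, ∇_T B = -τN),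
and V = l₀ T + cos θ N + l₁ B a unit torse-forming vector field along γ with potential f
and ω(T) = -f l₀ (so ∇_T V = f T - f l₀ V).  Then the Frenet equations force:
f(1-l₀²) - l₀' + κ cos θ = 0,  -f l₀ cos θ + θ' sin θ - l₀ κ + l₁ τ = 0,  and
f l₀ l₁ + l₁' + τ cos θ = 0.
Vector fields along γ are modeled as maps into the inner product space `E`;
`DT`, `DN`, `DB` are the covariant derivatives of the frame, and the covariant
derivative of V, expanded by the Leibniz rule, equals f T + ω(T) V (`htorse`). -/
theorem statement16 {E : Type*} [NormedAddCommGroup E] [InnerProductSpace ℝ E]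
    (T N B DT DN DB V : ℝ → E) (κ τ f l₀ l₁ θ : ℝ → ℝ)
    (hTT : ∀ s, (inner ℝ (T s) (T s) : ℝ) = 1)
    (hNN : ∀ s, (inner ℝ (N s) (N s) : ℝ) = 1)
    (hBB : ∀ s, (inner ℝ (B s) (B s) : ℝ) = 1)
    (hTN : ∀ s, (inner ℝ (T s) (N s) : ℝ) = 0)
    (hTB : ∀ s, (inner ℝ (T s) (B s) : ℝ) = 0)
    (hNB : ∀ s, (inner ℝ (N s) (B s) : ℝ) = 0)
    (hκpos : ∀ s, 0 < κ s)
    (hDT : ∀ s, DT s = κ s • N s)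
    (hDN : ∀ s, DN s = -κ s • T s + τ s • B s)
    (hDB : ∀ s, DB s = -τ s • N s)
    (hl₀ : Differentiable ℝ l₀) (hl₁ : Differentiable ℝ l₁) (hθ : Differentiable ℝ θ)
    (hV : ∀ s, V s = l₀ s • T s + Real.cos (θ s) • N s + l₁ s • B s)
    (hunit : ∀ s, l₀ s ^ 2 + Real.cos (θ s) ^ 2 + l₁ s ^ 2 = 1)
    (htorse : ∀ s,
      deriv l₀ s • T s + l₀ s • DT s +
        deriv (fun u => Real.cos (θ u)) s • N s + Real.cos (θ s) • DN s +
        deriv l₁ s • B s + l₁ s • DB s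
      = f s • T s + (-(f s * l₀ s)) • V s) :
    ∀ s,
      f s * (1 - l₀ s ^ 2) - deriv l₀ s + κ s * Real.cos (θ s) = 0 ∧
      -(f s * l₀ s * Real.cos (θ s)) + deriv θ s * Real.sin (θ s)
        - l₀ s * κ s + l₁ s * τ s = 0 ∧
      f s * l₀ s * l₁ s + deriv l₁ s + τ s * Real.cos (θ s) = 0 := by

  intro s
  have hc : deriv (fun u => Real.cos (θ u)) s = -Real.sin (θ s) * deriv θ s :=
    ((hθ s).hasDerivAt.cos).deriv
  have hNT : (inner ℝ (N s) (T s) : ℝ) = 0 := by rw [real_inner_comm]; exact hTN s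
  have hBT : (inner ℝ (B s) (T s) : ℝ) = 0 := by rw [real_inner_comm]; exact hTB s
  have hBN : (inner ℝ (B s) (N s) : ℝ) = 0 := by rw [real_inner_comm]; exact hNB s
  have h := htorse s
  rw [hDT s, hDN s, hDB s, hV s] at h
  have e1 := congrArg (fun v => (inner ℝ (T s) v : ℝ)) h
  have e2 := congrArg (fun v => (inner ℝ (N s) v : ℝ)) h
  have e3 := congrArg (fun v => (inner ℝ (B s) v : ℝ)) h
  simp only [inner_add_right, inner_smul_right, hTT, hNN, hBB, hTN, hTB, hNB,
    hNT, hBT, hBN, hc, inner_neg_right, mul_one, mul_zero, add_zero, zero_add, neg_smul, mul_neg, neg_zero] at e1 e2 e3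
  refine ⟨by nlinarith [e1], by nlinarith [e2], by nlinarith [e3]⟩
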